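/- Let M = x_0^{a_0} x_1^{a_1} with 0 < a_0 ≤ a_1. Then the real Waring rank of M equals a_0 + a_1, i.e. the degree of M. -/

import Mathlib

open MvPolynomial

/-- The Waring rank over `K` of a form `F` of degree `d`. -/
noncomputable def waringRank (K : Type*) [Field K] {n : ℕ} (d : ℕ)
    (F : MvPolynomial (Fin n) K) : ℕ :=
  sInf {s | ∃ (c : Fin s → K) (L : Fin s → Fin n → K),
    F = ∑ i, C (c i) * (∑ j, C (L i j) * X j) ^ d}


lemma key_multiset (R : Multiset ℝ) (h0 : (0:ℝ) ∉ R) :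
    2 * ((R.map (fun r => Polynomial.X - Polynomial.C r)).prod.coeff 2) * ((R.map (fun r => Polynomial.X - Polynomial.C r)).prod.coeff 0)
      + ((R.map (fun r => Polynomial.X - Polynomial.C r)).prod.coeff 0)^2 * (R.map (fun r => (r⁻¹)^2)).sum
      = ((R.map (fun r => Polynomial.X - Polynomial.C r)).prod.coeff 1)^2 := by
  induction R using Multiset.induction_on with
  | empty => simp [Polynomial.coeff_one]
  | cons r R ih =>
    have hr : r ≠ 0 := fun h => h0 (by simp [h])
    have h0' : (0:ℝ) ∉ R := fun h => h0 (Multiset.mem_cons_of_mem h)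
    have IH := ih h0'
    set Q := (R.map (fun r => Polynomial.X - Polynomial.C r)).prod with hQ
    have hexp : ((r ::ₘ R).map (fun r => Polynomial.X - Polynomial.C r)).prod = (Polynomial.X - Polynomial.C r) * Q := by
      rw [Multiset.map_cons, Multiset.prod_cons]
    have hc : ∀ k, ((Polynomial.X - Polynomial.C r) * Q).coeff (k+1) = Q.coeff k - r * Q.coeff (k+1) := by
      intro k
      rw [sub_mul, Polynomial.coeff_sub, Polynomial.coeff_X_mul, Polynomial.coeff_C_mul]
    have hc0 : ((Polynomial.X - Polynomial.C r) * Q).coeff 0 = - (r * Q.coeff 0) := by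
      rw [sub_mul, Polynomial.coeff_sub, Polynomial.coeff_C_mul, Polynomial.mul_coeff_zero, Polynomial.coeff_X_zero, zero_mul, zero_sub]
    have hsum : ((r ::ₘ R).map (fun r => (r⁻¹)^2)).sum
        = (r⁻¹)^2 + (R.map (fun r => (r⁻¹)^2)).sum := by
      rw [Multiset.map_cons, Multiset.sum_cons]
    rw [hexp, hsum, hc0]
    have h1 := hc 0
    have h2 := hc 1
    rw [h1, h2]
    have hr1 : r^2 * (r⁻¹)^2 = 1 := by
      field_simp
    linear_combination r^2 * IH + ((Q.coeff 0)^2) * hr1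

lemma splits_derivative (f : Polynomial ℝ) (hf : f.Splits) :
    f.derivative.Splits := by
  by_cases hd : f.derivative = 0
  · rw [hd]; exact Polynomial.Splits.zero
  have hf0 : f ≠ 0 := fun h => hd (by rw [h, Polynomial.derivative_zero])
  have hn0 : f.natDegree ≠ 0 := by
    intro h
    rw [Polynomial.natDegree_eq_zero] at h
    obtain ⟨x, rfl⟩ := h
    exact hd (Polynomial.derivative_C)
  rw [Polynomial.splits_iff_card_roots]
  have h1 : Multiset.card f.roots = f.natDegree := Polynomial.splits_iff_card_roots.mp hf
  have h2 := Polynomial.card_roots_le_derivative f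
  have h3 := Polynomial.card_roots' f.derivative
  have h4 := Polynomial.natDegree_derivative_le f
  omega

lemma gap_core (f : Polynomial ℝ) (hs : f.Splits) (h0 : f.coeff 0 ≠ 0)
    (h1 : f.coeff 1 = 0) (h2 : f.coeff 2 = 0) (q : ℕ) (hq : 3 ≤ q) (hcq : f.coeff q ≠ 0) :
    False := by
  have hf0 : f ≠ 0 := fun h => h0 (by simp [h])
  have hdeg : q ≤ f.natDegree := Polynomial.le_natDegree_of_ne_zero hcq
  have hcard : Multiset.card f.roots = f.natDegree := Polynomial.splits_iff_card_roots.mp hs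
  have hRne : f.roots ≠ 0 := by
    intro h
    rw [h] at hcard
    simp at hcard
    omega
  have hrne : (0:ℝ) ∉ f.roots := by
    intro h
    have := Polynomial.isRoot_of_mem_roots h
    rw [Polynomial.IsRoot, ← Polynomial.coeff_zero_eq_eval_zero] at this
    exact h0 this
  have hfac : f = Polynomial.C f.leadingCoeff * (f.roots.map (fun r => Polynomial.X - Polynomial.C r)).prod :=
    hs.eq_prod_roots
  have hlc : f.leadingCoeff ≠ 0 := Polynomial.leadingCoeff_ne_zero.mpr hf0
  set Q := (f.roots.map (fun r => Polynomial.X - Polynomial.C r)).prod with hQdef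
  have hck : ∀ k, f.coeff k = f.leadingCoeff * Q.coeff k := by
    intro k; conv_lhs => rw [hfac]
    rw [Polynomial.coeff_C_mul]
  have hq0 : Q.coeff 0 ≠ 0 := by
    intro h; apply h0; rw [hck 0, h, mul_zero]
  have hq1 : Q.coeff 1 = 0 := by
    have := hck 1; rw [h1] at this
    exact (mul_eq_zero.mp this.symm).resolve_left hlc
  have hq2 : Q.coeff 2 = 0 := by
    have := hck 2; rw [h2] at this
    exact (mul_eq_zero.mp this.symm).resolve_left hlc
  have hkey := key_multiset f.roots hrne
  rw [← hQdef, hq1, hq2] at hkey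
  simp only [mul_zero, zero_mul, zero_pow, ne_eq] at hkey
  obtain ⟨r0, hr0⟩ := Multiset.exists_mem_of_ne_zero hRne
  have hr0ne : r0 ≠ 0 := fun h => hrne (h ▸ hr0)
  have hsum : 0 < ((f.roots.map (fun r => (r⁻¹)^2)).sum) := by
    have hmem : (r0⁻¹)^2 ∈ f.roots.map (fun r => (r⁻¹)^2) :=
      Multiset.mem_map_of_mem _ hr0
    have hle := Multiset.single_le_sum (fun x hx => by
      obtain ⟨r, hr, rfl⟩ := Multiset.mem_map.mp hx
      positivity) _ hmem
    have : (0:ℝ) < (r0⁻¹)^2 := by positivity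
    linarith
  have hpos : 0 < Q.coeff 0 ^ 2 := by positivity
  have := mul_pos hpos hsum
  rw [zero_add, show ((0:ℝ)^2) = 0 from by norm_num] at hkey
  linarith

lemma gap_lemma (p : ℕ) : ∀ (f : Polynomial ℝ), f.Splits → ∀ q, p + 3 ≤ q →
    f.coeff p ≠ 0 → f.coeff q ≠ 0 → (∀ j, p < j → j < q → f.coeff j = 0) → False := by
  induction p with
  | zero =>
    intro f hs q hq hp hcq hz
    exact gap_core f hs hp (hz 1 (by omega) (by omega)) (hz 2 (by omega) (by omega)) q hq hcq
  | succ p ih =>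
    intro f hs q hq hp hcq hz
    apply ih f.derivative (splits_derivative f hs) (q-1) (by omega)
    · rw [Polynomial.coeff_derivative]
      intro h
      rcases mul_eq_zero.mp h with h | h
      · exact hp h
      · have : ((p:ℝ)+1) ≠ 0 := by positivity
        exact this h
    · rw [Polynomial.coeff_derivative]
      have hq1 : q - 1 + 1 = q := by omega
      rw [hq1]
      intro h
      rcases mul_eq_zero.mp h with h | h
      · exact hcq h
      · have : (((q-1:ℕ):ℝ)+1) ≠ 0 := by positivity
        exact this h
    · intro j hj1 hj2
      rw [Polynomial.coeff_derivative, hz (j+1) (by omega) (by omega), zero_mul]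

lemma homog_eval {ι : Type*} [DecidableEq ι] (t : Finset ι) (α β : ι → ℝ) (u v : ℝ) :
    ∑ k ∈ Finset.range (t.card + 1),
      (∏ i ∈ t, (Polynomial.C (β i) * Polynomial.X - Polynomial.C (α i))).coeff k * u ^ k * v ^ (t.card - k)
    = ∏ i ∈ t, (β i * u - α i * v) := by
  induction t using Finset.induction_on with
  | empty => simp
  | @insert j t hj ih =>
    rw [Finset.prod_insert hj, Finset.prod_insert hj, Finset.card_insert_of_notMem hj]
    set P := ∏ i ∈ t, (Polynomial.C (β i) * Polynomial.X - Polynomial.C (α i)) with hP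
    set n := t.card with hn
    have hPdeg : P.natDegree ≤ n := by
      refine le_trans (Polynomial.natDegree_prod_le _ _) ?_
      rw [hn, Finset.card_eq_sum_ones]
      refine Finset.sum_le_sum fun i _ => ?_
      have h : (Polynomial.C (β i) * Polynomial.X - Polynomial.C (α i)) = Polynomial.C (β i) * Polynomial.X + Polynomial.C (-(α i)) := by
        rw [map_neg]; ring
      rw [h]
      exact Polynomial.natDegree_linear_le
    have hTop : P.coeff (n+1) = 0 := Polynomial.coeff_eq_zero_of_natDegree_lt (by omega)
    set Q := (Polynomial.C (β j) * Polynomial.X - Polynomial.C (α j)) * P with hQ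
    have hcoeff : ∀ k, Q.coeff (k+1) = β j * P.coeff k - α j * P.coeff (k+1) := by
      intro k
      rw [hQ, sub_mul, Polynomial.coeff_sub, mul_assoc, Polynomial.coeff_C_mul, Polynomial.coeff_X_mul, Polynomial.coeff_C_mul]
    have hcoeff0 : Q.coeff 0 = - (α j * P.coeff 0) := by
      rw [hQ, sub_mul, Polynomial.coeff_sub, mul_assoc, Polynomial.coeff_C_mul, Polynomial.coeff_C_mul, Polynomial.mul_coeff_zero,
        Polynomial.coeff_X_zero, zero_mul, mul_zero, zero_sub]
    set T := ∑ k ∈ Finset.range (n+1), P.coeff k * u ^ k * v ^ (n - k) with hT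
    have h1 : ∑ k ∈ Finset.range (n + 1 + 1), Q.coeff k * u ^ k * v ^ (n + 1 - k)
        = (∑ k ∈ Finset.range (n+1), Q.coeff (k+1) * u ^ (k+1) * v ^ (n - k))
          + Q.coeff 0 * v ^ (n+1) := by
      rw [Finset.sum_range_succ' (fun k => Q.coeff k * u ^ k * v ^ (n + 1 - k)) (n+1)]
      congr 1
      · refine Finset.sum_congr rfl fun k _ => ?_
        rw [show n + 1 - (k+1) = n - k from by omega]
      · rw [pow_zero, mul_one, Nat.sub_zero]
    have h2 : ∑ k ∈ Finset.range (n+1), Q.coeff (k+1) * u ^ (k+1) * v ^ (n - k)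
        = β j * u * T - α j * (∑ k ∈ Finset.range (n+1), P.coeff (k+1) * u^(k+1) * v^(n-k)) := by
      rw [hT, Finset.mul_sum, Finset.mul_sum, ← Finset.sum_sub_distrib]
      refine Finset.sum_congr rfl fun k _ => ?_
      rw [hcoeff]
      ring
    have h3 : (∑ k ∈ Finset.range (n+1), P.coeff (k+1) * u^(k+1) * v^(n-k))
        = v * T - P.coeff 0 * v ^ (n+1) := by
      have e1 : (∑ k ∈ Finset.range (n+1), P.coeff (k+1) * u^(k+1) * v^(n+1-(k+1)))
            + P.coeff 0 * u ^ 0 * v ^ (n+1-0)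
          = (∑ k ∈ Finset.range (n+1), P.coeff k * u^k * v^(n+1-k))
            + P.coeff (n+1) * u^(n+1) * v^(n+1-(n+1)) :=
        (Finset.sum_range_succ' (fun k => P.coeff k * u^k * v^(n+1-k)) (n+1)).symm.trans
          (Finset.sum_range_succ (fun k => P.coeff k * u^k * v^(n+1-k)) (n+1))
      have e2 : ∀ k ∈ Finset.range (n+1), P.coeff (k+1) * u^(k+1) * v^(n+1-(k+1))
          = P.coeff (k+1) * u^(k+1) * v^(n-k) := fun k _ => by
        rw [show n + 1 - (k+1) = n - k from by omega]
      have e3 : ∀ k ∈ Finset.range (n+1), P.coeff k * u^k * v^(n+1-k)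
          = v * (P.coeff k * u^k * v^(n-k)) := fun k hk => by
        rw [show n + 1 - k = (n - k) + 1 from by
          have := Finset.mem_range.mp hk; omega, pow_succ]
        ring
      rw [Finset.sum_congr rfl e2, Finset.sum_congr rfl e3, ← Finset.mul_sum] at e1
      rw [hTop] at e1
      rw [← hT] at e1
      simp only [pow_zero, mul_one, Nat.sub_zero, zero_mul] at e1
      linarith
    rw [h1, h2, h3, hcoeff0, ← ih]
    ring

lemma lin_natDegree_le (bb aa : ℝ) : (Polynomial.C bb * Polynomial.X - Polynomial.C aa).natDegree ≤ 1 := by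
  rw [show (Polynomial.C bb * Polynomial.X - Polynomial.C aa) = Polynomial.C bb * Polynomial.X + Polynomial.C (-aa) from by rw [map_neg]; ring]
  exact Polynomial.natDegree_linear_le

lemma lin_coeff_zero (bb aa : ℝ) : (Polynomial.C bb * Polynomial.X - Polynomial.C aa).coeff 0 = -aa := by
  simp

lemma lin_coeff_one (bb aa : ℝ) : (Polynomial.C bb * Polynomial.X - Polynomial.C aa).coeff 1 = bb := by
  rw [Polynomial.coeff_sub, Polynomial.coeff_C_mul]
  simp

lemma no_rep_nondeg (a b s : ℕ) (ha : 1 ≤ a) (hab : a ≤ b) (hs : s < a + b)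
    (c α β : Fin s → ℝ) (e : ℝ) (he : e ≠ 0)
    (hnz : ∀ i, α i ≠ 0 ∨ β i ≠ 0)
    (hnp : ∀ i j, i ≠ j → α i * β j - α j * β i ≠ 0)
    (hm : ∀ k ≤ a + b, ∑ i, c i * α i ^ (a + b - k) * β i ^ k = if k = b then e else 0) :
    False := by
  classical
  set f := ∏ i : Fin s, (Polynomial.C (β i) * Polynomial.X - Polynomial.C (α i)) with hf
  have hcard : (Finset.univ : Finset (Fin s)).card = s := by simp
  have hndle : f.natDegree ≤ s := by
    refine le_trans (Polynomial.natDegree_prod_le _ _) ?_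
    have h1 : ∑ i : Fin s, (Polynomial.C (β i) * Polynomial.X - Polynomial.C (α i)).natDegree
        ≤ ∑ _i : Fin s, (1:ℕ) :=
      Finset.sum_le_sum (g := fun _ => (1:ℕ)) fun i _ => lin_natDegree_le _ _
    simpa using h1
  have h_eval : ∀ i, ∑ k ∈ Finset.range (s+1), f.coeff k * (α i)^k * (β i)^(s-k) = 0 := by
    intro i
    have h := homog_eval (Finset.univ : Finset (Fin s)) α β (α i) (β i)
    rw [hcard] at h
    rw [hf, h]
    exact Finset.prod_eq_zero (Finset.mem_univ i) (by ring)
  have hwin : ∀ k₀, k₀ ≤ s → s ≤ k₀ + b → k₀ ≤ a → f.coeff k₀ = 0 := by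
    intro k₀ hk1 hk2 hk3
    set j := k₀ + b - s with hj
    have hjle : j ≤ a + b - s := by omega
    have key : ∑ i, (c i * α i ^ (a+b-s-j) * β i ^ j)
        * (∑ k ∈ Finset.range (s+1), f.coeff k * (α i)^k * (β i)^(s-k)) = 0 := by
      refine Finset.sum_eq_zero fun i _ => ?_
      rw [h_eval i, mul_zero]
    have key2 : ∑ k ∈ Finset.range (s+1),
        f.coeff k * (∑ i, c i * α i ^ (a + b - (s+j-k)) * β i ^ (s+j-k)) = 0 := by
      rw [← key]
      refine Eq.symm ?_
      have e1 : ∀ i : Fin s, c i * α i ^ (a+b-s-j) * β i ^ j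
          * (∑ k ∈ Finset.range (s+1), f.coeff k * (α i)^k * (β i)^(s-k))
          = ∑ k ∈ Finset.range (s+1),
              f.coeff k * (c i * α i ^ (a + b - (s+j-k)) * β i ^ (s+j-k)) := by
        intro i
        rw [Finset.mul_sum]
        refine Finset.sum_congr rfl fun k hk => ?_
        have hks : k ≤ s := by have := Finset.mem_range.mp hk; omega
        rw [show a + b - (s+j-k) = (a+b-s-j) + k from by omega,
          show s + j - k = j + (s-k) from by omega, pow_add, pow_add]
        ring
      calc ∑ i, c i * α i ^ (a+b-s-j) * β i ^ j
            * (∑ k ∈ Finset.range (s+1), f.coeff k * (α i)^k * (β i)^(s-k))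
          = ∑ i, ∑ k ∈ Finset.range (s+1),
              f.coeff k * (c i * α i ^ (a + b - (s+j-k)) * β i ^ (s+j-k)) :=
            Finset.sum_congr rfl fun i _ => e1 i
        _ = ∑ k ∈ Finset.range (s+1), ∑ i,
              f.coeff k * (c i * α i ^ (a + b - (s+j-k)) * β i ^ (s+j-k)) := Finset.sum_comm
        _ = ∑ k ∈ Finset.range (s+1),
              f.coeff k * ∑ i, c i * α i ^ (a + b - (s+j-k)) * β i ^ (s+j-k) :=
            Finset.sum_congr rfl fun k _ => (Finset.mul_sum _ _ _).symm
    have key3 : ∑ k ∈ Finset.range (s+1),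
        f.coeff k * (if s+j-k = b then e else 0) = 0 := by
      refine Eq.trans (Finset.sum_congr rfl fun k hk => ?_) key2
      rw [hm (s+j-k) (by omega)]
    have key4 : f.coeff k₀ * e = 0 := by
      rw [← key3]
      rw [Finset.sum_eq_single k₀]
      · rw [if_pos (by omega)]
      · intro k hk hne
        have hks : k ≤ s := by have := Finset.mem_range.mp hk; omega
        rw [if_neg (by omega), mul_zero]
      · intro hk
        exact absurd (Finset.mem_range.mpr (by omega)) hk
    rcases mul_eq_zero.mp key4 with h | h
    · exact h
    · exact absurd h he
  have hfacne : ∀ i : Fin s, (Polynomial.C (β i) * Polynomial.X - Polynomial.C (α i)) ≠ 0 := by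
    intro i h
    have h1 : (Polynomial.C (β i) * Polynomial.X - Polynomial.C (α i)).coeff 1 = 0 := by rw [h]; simp
    have h0 : (Polynomial.C (β i) * Polynomial.X - Polynomial.C (α i)).coeff 0 = 0 := by rw [h]; simp
    rw [lin_coeff_one] at h1
    rw [lin_coeff_zero] at h0
    rcases hnz i with hh | hh
    · exact hh (by linarith)
    · exact hh h1
  have hfne : f ≠ 0 := Finset.prod_ne_zero_iff.mpr fun i _ => hfacne i
  have hsplits : f.Splits :=
    Polynomial.Splits.prod fun i _ => Polynomial.Splits.of_natDegree_le_one (lin_natDegree_le _ _)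
  have hc01 : f.coeff 0 ≠ 0 ∨ f.coeff 1 ≠ 0 := by
    by_cases hall : ∀ i, α i ≠ 0
    · left
      rw [Polynomial.coeff_zero_eq_eval_zero, hf, Polynomial.eval_prod]
      refine Finset.prod_ne_zero_iff.mpr fun i _ => ?_
      simpa using fun h => hall i (by linarith)
    · right
      push_neg at hall
      obtain ⟨i₀, hi₀⟩ := hall
      have hβ : β i₀ ≠ 0 := (hnz i₀).resolve_left (by simp [hi₀])
      have hrest : ∀ j ∈ Finset.univ.erase i₀, α j ≠ 0 := by
        intro j hj
        have hne : j ≠ i₀ := (Finset.mem_erase.mp hj).1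
        intro hαj
        exact hnp j i₀ hne (by rw [hαj, hi₀]; ring)
      have hsplit : f = (Polynomial.C (β i₀) * Polynomial.X) * ∏ j ∈ Finset.univ.erase i₀,
          (Polynomial.C (β j) * Polynomial.X - Polynomial.C (α j)) := by
        rw [hf, ← Finset.mul_prod_erase Finset.univ _ (Finset.mem_univ i₀), hi₀]
        simp
      rw [hsplit, mul_assoc, Polynomial.coeff_C_mul, Polynomial.coeff_X_mul]
      refine mul_ne_zero hβ ?_
      rw [Polynomial.coeff_zero_eq_eval_zero, Polynomial.eval_prod]
      refine Finset.prod_ne_zero_iff.mpr fun j hj => ?_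
      simpa using fun h => hrest j hj (by linarith)
  by_cases hlow : ∃ p, p + b < s ∧ f.coeff p ≠ 0
  · obtain ⟨p₀, hp₀b, hp₀ne⟩ := hlow
    have hbs : b < s := by omega
    -- natDegree bound below
    have hZ : ∀ i j, i ≠ j → β i = 0 → β j ≠ 0 := by
      intro i j hij hbi hbj
      exact hnp i j hij (by rw [hbi, hbj]; ring)
    have hndge : s - 1 ≤ f.natDegree := by
      rw [hf, Polynomial.natDegree_prod _ _ fun i _ => hfacne i]
      have hsub : (Finset.univ.filter (fun i => β i ≠ 0)) ⊆ Finset.univ := Finset.filter_subset _ _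
      have h1 : ∑ i ∈ Finset.univ.filter (fun i => β i ≠ 0), (Polynomial.C (β i) * Polynomial.X - Polynomial.C (α i)).natDegree
          ≤ ∑ i : Fin s, (Polynomial.C (β i) * Polynomial.X - Polynomial.C (α i)).natDegree :=
        Finset.sum_le_sum_of_subset hsub
      have h2 : ∑ i ∈ Finset.univ.filter (fun i => β i ≠ 0), (Polynomial.C (β i) * Polynomial.X - Polynomial.C (α i)).natDegree
          = (Finset.univ.filter (fun i => β i ≠ 0)).card := by
        rw [Finset.card_eq_sum_ones]
        refine Finset.sum_congr rfl fun i hi => ?_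
        have hbi : β i ≠ 0 := (Finset.mem_filter.mp hi).2
        rw [show (Polynomial.C (β i) * Polynomial.X - Polynomial.C (α i)) = Polynomial.C (β i) * Polynomial.X + Polynomial.C (-(α i)) from by rw [map_neg]; ring]
        exact Polynomial.natDegree_linear hbi
      have h3 : (Finset.univ.filter (fun i => β i = 0)).card ≤ 1 := by
        refine Finset.card_le_one.mpr fun i hi j hj => ?_
        by_contra hij
        exact hZ i j hij (Finset.mem_filter.mp hi).2 (Finset.mem_filter.mp hj).2
      have h4 := Finset.card_filter_add_card_filter_not
        (s := (Finset.univ : Finset (Fin s))) (p := fun i => β i = 0)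
      rw [hcard] at h4
      have h5 : (Finset.univ.filter (fun i => ¬ β i = 0)).card
          = (Finset.univ.filter (fun i => β i ≠ 0)).card := rfl
      omega
    have hand : a < f.natDegree := by
      rcases Nat.lt_or_ge a f.natDegree with h | h
      · exact h
      · exfalso
        have h6 : f.natDegree ≤ a := h
        have h7 : s - 1 ≤ a := le_trans hndge h6
        have hna : f.natDegree = a := by
          -- f.natDegree ≥ s - 1 and coeff natDegree ≠ 0; if natDegree < s - b ... 
          omega
        have : f.coeff f.natDegree ≠ 0 := by
          rw [← Polynomial.leadingCoeff]
          exact Polynomial.leadingCoeff_ne_zero.mpr hfne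
        exact this (hwin f.natDegree (by omega) (by omega) (by omega))
    -- maximal low index
    set Fs := (Finset.range (s - b)).filter (fun k => f.coeff k ≠ 0) with hFs
    have hFsne : Fs.Nonempty := ⟨p₀, Finset.mem_filter.mpr ⟨Finset.mem_range.mpr (by omega), hp₀ne⟩⟩
    set p := Fs.max' hFsne with hp
    have hpmem := Fs.max'_mem hFsne
    have hplt : p < s - b := Finset.mem_range.mp (Finset.mem_filter.mp hpmem).1
    have hpne : f.coeff p ≠ 0 := (Finset.mem_filter.mp hpmem).2
    -- minimal high index
    set Qs := (Finset.range (f.natDegree + 1)).filter (fun k => a < k ∧ f.coeff k ≠ 0) with hQs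
    have hQsne : Qs.Nonempty := by
      refine ⟨f.natDegree, Finset.mem_filter.mpr ⟨Finset.mem_range.mpr (by omega), hand, ?_⟩⟩
      rw [← Polynomial.leadingCoeff]
      exact Polynomial.leadingCoeff_ne_zero.mpr hfne
    set q := Qs.min' hQsne with hq
    have hqmem := Qs.min'_mem hQsne
    have hqa : a < q := (Finset.mem_filter.mp hqmem).2.1
    have hqne : f.coeff q ≠ 0 := (Finset.mem_filter.mp hqmem).2.2
    have hqnd : q ≤ f.natDegree := by
      have := Finset.mem_range.mp (Finset.mem_filter.mp hqmem).1
      omega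
    refine gap_lemma p f hsplits q (by omega) hpne hqne ?_
    intro j hj1 hj2
    by_contra hjne
    rcases Nat.lt_or_ge j (s - b) with hc | hc
    · have : j ∈ Fs := Finset.mem_filter.mpr ⟨Finset.mem_range.mpr hc, hjne⟩
      exact absurd (Fs.le_max' j this) (by omega)
    · rcases le_or_gt j a with hc2 | hc2
      · exact hjne (hwin j (by omega) (by omega) hc2)
      · have : j ∈ Qs := Finset.mem_filter.mpr
          ⟨Finset.mem_range.mpr (by omega), hc2, hjne⟩
        exact absurd (Qs.min'_le j this) (by omega)
  · push_neg at hlow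
    have hc0 : f.coeff 0 = 0 := by
      rcases Nat.lt_or_ge b s with h | h
      · exact hlow 0 (by omega)
      · exact hwin 0 (by omega) (by omega) (by omega)
    have hc1 : f.coeff 1 = 0 := by
      rcases Nat.lt_or_ge (1 + b) s with h | h
      · exact hlow 1 (by omega)
      · rcases Nat.eq_zero_or_pos s with hs0 | hs0
        · exact Polynomial.coeff_eq_zero_of_natDegree_lt (by omega)
        · exact hwin 1 (by omega) (by omega) (by omega)
    rcases hc01 with h | h
    · exact h hc0
    · exact h hc1

lemma no_rep (a b : ℕ) (ha : 1 ≤ a) (hab : a ≤ b) (e : ℝ) (he : e ≠ 0) :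
    ∀ s, s < a + b → ∀ (c α β : Fin s → ℝ),
    (∀ k ≤ a + b, ∑ i, c i * α i ^ (a + b - k) * β i ^ k = if k = b then e else 0) → False := by
  intro s
  induction s using Nat.strong_induction_on with
  | _ s ih =>
    intro hs c α β hm
    by_cases hdeg : ∃ i, c i = 0 ∨ (α i = 0 ∧ β i = 0)
    · obtain ⟨i, hi⟩ := hdeg
      have hspos : 0 < s := i.pos
      obtain ⟨n, rfl⟩ : ∃ n, s = n + 1 := ⟨s - 1, by omega⟩
      apply ih n (by omega) (by omega) (c ∘ i.succAbove) (α ∘ i.succAbove) (β ∘ i.succAbove)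
      intro k hk
      have hmk := hm k hk
      rw [Fin.sum_univ_succAbove
        (fun x => c x * α x ^ (a + b - k) * β x ^ k) i] at hmk
      have hz : c i * α i ^ (a + b - k) * β i ^ k = 0 := by
        rcases hi with h | ⟨h1, h2⟩
        · rw [h, zero_mul, zero_mul]
        · rcases Nat.eq_zero_or_pos k with hk0 | hk0
          · rw [h1, zero_pow (by omega), mul_zero, zero_mul]
          · rw [h2, zero_pow (by omega), mul_zero]
      rw [hz, zero_add] at hmk
      exact hmk
    · push_neg at hdeg
      have hnz : ∀ i, α i ≠ 0 ∨ β i ≠ 0 := by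
        intro i
        by_cases h : α i = 0
        · exact Or.inr ((hdeg i).2 h)
        · exact Or.inl h
      by_cases hprop : ∃ i j, i ≠ j ∧ α i * β j - α j * β i = 0
      · obtain ⟨i, j, hij, hcross⟩ := hprop
        have hcross' : α i * β j = α j * β i := by linarith
        obtain ⟨lam, hla, hlb⟩ : ∃ lam, α j = lam * α i ∧ β j = lam * β i := by
          rcases hnz i with h | h
          · exact ⟨α j / α i, by field_simp, by
              field_simp
              nlinarith [hcross']⟩
          · exact ⟨β j / β i, by
              field_simp
              nlinarith [hcross'], by field_simp⟩
        have hspos : 0 < s := i.pos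
        obtain ⟨n, rfl⟩ : ∃ n, s = n + 1 := ⟨s - 1, by omega⟩
        obtain ⟨i', hi'⟩ : ∃ i', j.succAbove i' = i := Fin.exists_succAbove_eq hij
        apply ih n (by omega) (by omega)
          (fun x => c (j.succAbove x) + (if x = i' then c j * lam ^ (a+b) else 0))
          (α ∘ j.succAbove) (β ∘ j.succAbove)
        intro k hk
        have hmk := hm k hk
        rw [Fin.sum_univ_succAbove
          (fun x => c x * α x ^ (a + b - k) * β x ^ k) j] at hmk
        have hsplit : ∑ x : Fin n,
            (c (j.succAbove x) + (if x = i' then c j * lam ^ (a+b) else 0))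
              * (α ∘ j.succAbove) x ^ (a + b - k) * (β ∘ j.succAbove) x ^ k
            = (∑ x : Fin n, c (j.succAbove x)
                * α (j.succAbove x) ^ (a + b - k) * β (j.succAbove x) ^ k)
              + c j * lam ^ (a+b) * α i ^ (a + b - k) * β i ^ k := by
          calc ∑ x : Fin n,
              (c (j.succAbove x) + (if x = i' then c j * lam ^ (a+b) else 0))
                * (α ∘ j.succAbove) x ^ (a + b - k) * (β ∘ j.succAbove) x ^ k
              = ∑ x : Fin n, (c (j.succAbove x)
                  * α (j.succAbove x) ^ (a + b - k) * β (j.succAbove x) ^ k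
                + (if x = i' then c j * lam ^ (a+b) * α i ^ (a+b-k) * β i ^ k else 0)) := by
                refine Finset.sum_congr rfl fun x _ => ?_
                simp only [Function.comp_apply]
                by_cases hx : x = i'
                · subst hx
                  rw [if_pos rfl, if_pos rfl, hi']
                  ring
                · rw [if_neg hx, if_neg hx, add_zero, add_zero]
            _ = (∑ x : Fin n, c (j.succAbove x)
                  * α (j.succAbove x) ^ (a + b - k) * β (j.succAbove x) ^ k)
                + ∑ x : Fin n, (if x = i' then c j * lam ^ (a+b) * α i ^ (a+b-k) * β i ^ k else 0) :=
                Finset.sum_add_distrib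
            _ = _ := by
                rw [Finset.sum_ite_eq' Finset.univ i'
                  (fun _ => c j * lam ^ (a+b) * α i ^ (a+b-k) * β i ^ k)]
                rw [if_pos (Finset.mem_univ i')]
        have hterm : c j * lam^(a+b) * α i^(a+b-k) * β i^k = c j * α j ^ (a+b-k) * β j ^ k := by
          rw [hla, hlb, mul_pow, mul_pow,
            show lam ^ (a+b) = lam ^ (a+b-k) * lam ^ k from by rw [← pow_add]; congr 1; omega]
          ring
        rw [hsplit, hterm]
        linarith [hmk]
      · push_neg at hprop
        exact no_rep_nondeg a b s ha hab hs c α β e he hnz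
          (fun i j h => hprop i j h) hm

lemma fin2_apply_0 (x y : ℕ) :
    (Finsupp.single (0 : Fin 2) x + Finsupp.single (1 : Fin 2) y : Fin 2 →₀ ℕ) (0 : Fin 2) = x := by
  simp

lemma fin2_apply_1 (x y : ℕ) :
    (Finsupp.single (0 : Fin 2) x + Finsupp.single (1 : Fin 2) y : Fin 2 →₀ ℕ) (1 : Fin 2) = y := by
  simp

lemma fin2_eq_single (m : Fin 2 →₀ ℕ) :
    Finsupp.single (0 : Fin 2) (m 0) + Finsupp.single (1 : Fin 2) (m 1) = m := by
  ext i
  fin_cases i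
  · simpa using fin2_apply_0 (m 0) (m 1)
  · simpa using fin2_apply_1 (m 0) (m 1)

lemma linear_pow_expand (u v : ℝ) (d : ℕ) :
    (C u * X 0 + C v * X 1 : MvPolynomial (Fin 2) ℝ)^d
    = ∑ k ∈ Finset.range (d+1), monomial (Finsupp.single 0 k + Finsupp.single 1 (d-k))
        (u^k * v^(d-k) * (d.choose k : ℝ)) := by
  rw [add_pow]
  refine Finset.sum_congr rfl fun k hk => ?_
  rw [mul_pow, mul_pow, ← C_pow, ← C_pow, X_pow_eq_monomial, X_pow_eq_monomial]
  rw [C_mul_monomial, C_mul_monomial, monomial_mul]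
  rw [show ((d.choose k : ℕ) : MvPolynomial (Fin 2) ℝ) = C ((d.choose k : ℕ) : ℝ) from by
    simp]
  rw [mul_comm _ (C ((d.choose k : ℕ) : ℝ)), C_mul_monomial]
  congr 1
  ring

lemma coeff_rep (d s : ℕ) (c : Fin s → ℝ) (L : Fin s → Fin 2 → ℝ) (m : Fin 2 →₀ ℕ) :
    coeff m (∑ i, C (c i) * (∑ j, C (L i j) * X j)^d)
    = if m 0 + m 1 = d
      then (d.choose (m 0) : ℝ) * ∑ i, c i * (L i 0)^(m 0) * (L i 1)^(m 1)
      else 0 := by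
  have hsum2 : ∀ i : Fin s, (∑ j : Fin 2, C (L i j) * X j)
      = C (L i 0) * X 0 + C (L i 1) * X 1 := fun i => Fin.sum_univ_two _
  have key : ∀ i : Fin s, coeff m ((C (L i 0) * X 0 + C (L i 1) * X 1)^d)
      = if m 0 + m 1 = d then (L i 0)^(m 0) * (L i 1)^(m 1) * (d.choose (m 0):ℝ) else 0 := by
    intro i
    rw [linear_pow_expand, coeff_sum]
    by_cases hmd : m 0 + m 1 = d
    · rw [if_pos hmd]
      rw [Finset.sum_eq_single (m 0)]
      · rw [coeff_monomial, if_pos, show d - m 0 = m 1 from by omega]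
        rw [show d - m 0 = m 1 from by omega]
        exact fin2_eq_single m
      · intro k hk hkne
        rw [coeff_monomial, if_neg]
        intro h
        apply hkne
        have h0 := DFunLike.congr_fun h (0 : Fin 2)
        rwa [fin2_apply_0] at h0
      · intro h
        exact absurd (Finset.mem_range.mpr (by omega)) h
    · rw [if_neg hmd]
      refine Finset.sum_eq_zero fun k hk => ?_
      rw [coeff_monomial, if_neg]
      intro h
      have h0 := DFunLike.congr_fun h (0 : Fin 2)
      have h1 := DFunLike.congr_fun h (1 : Fin 2)
      rw [fin2_apply_0] at h0
      rw [fin2_apply_1] at h1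
      have := Finset.mem_range.mp hk
      omega
  rw [coeff_sum]
  by_cases hmd : m 0 + m 1 = d
  · rw [if_pos hmd, Finset.mul_sum]
    refine Finset.sum_congr rfl fun i _ => ?_
    rw [coeff_C_mul, hsum2 i, key i, if_pos hmd]
    ring
  · rw [if_neg hmd]
    refine Finset.sum_eq_zero fun i _ => ?_
    rw [coeff_C_mul, hsum2 i, key i, if_neg hmd, mul_zero]

lemma coeff_monomial_side (a b : ℕ) (m : Fin 2 →₀ ℕ) :
    coeff m ((X 0 : MvPolynomial (Fin 2) ℝ)^a * X 1^b)
    = if m 0 = a ∧ m 1 = b then 1 else 0 := by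
  rw [X_pow_eq_monomial, X_pow_eq_monomial, monomial_mul, coeff_monomial, one_mul]
  by_cases h : m 0 = a ∧ m 1 = b
  · rw [if_pos h, if_pos]
    rw [← h.1, ← h.2]
    exact fin2_eq_single m
  · rw [if_neg h, if_neg]
    intro hh
    apply h
    have h0 := DFunLike.congr_fun hh (0 : Fin 2)
    have h1 := DFunLike.congr_fun hh (1 : Fin 2)
    rw [fin2_apply_0] at h0
    rw [fin2_apply_1] at h1
    exact ⟨h0.symm, h1.symm⟩

open Polynomial in
lemma sign_coeff (R : Multiset ℝ) : (∀ r ∈ R, 0 < r) →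
    ∀ k ≤ R.card, 0 < (-1:ℝ)^(R.card - k) * ((R.map (fun r => Polynomial.X - Polynomial.C r)).prod).coeff k := by
  induction R using Multiset.induction_on with
  | empty =>
    intro _ k hk
    have hk0 : k = 0 := by simpa using hk
    subst hk0
    simp [Polynomial.coeff_one]
  | cons r R ih =>
    intro hpos k hk
    have hr : 0 < r := hpos r (Multiset.mem_cons_self r R)
    have hR : ∀ x ∈ R, 0 < x := fun x hx => hpos x (Multiset.mem_cons_of_mem hx)
    set c := R.card with hc
    set Q := (R.map (fun r => Polynomial.X - Polynomial.C r)).prod with hQ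
    have hcard : (r ::ₘ R).card = c + 1 := by rw [Multiset.card_cons]
    have hexp : ((r ::ₘ R).map (fun r => Polynomial.X - Polynomial.C r)).prod = (Polynomial.X - Polynomial.C r) * Q := by
      rw [Multiset.map_cons, Multiset.prod_cons]
    have hQdeg : Q.natDegree ≤ c := by
      refine le_trans (Polynomial.natDegree_multiset_prod_le _) ?_
      rw [Multiset.map_map]
      have : (R.map (natDegree ∘ fun r => (Polynomial.X : ℝ[X]) - Polynomial.C r)) = R.map (fun _ => 1) := by
        refine Multiset.map_congr rfl fun x _ => ?_
        exact natDegree_X_sub_C x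
      rw [this, Multiset.map_const', Multiset.sum_replicate, smul_eq_mul, mul_one]
    rw [hcard] at hk ⊢
    rw [hexp]
    rcases Nat.eq_zero_or_pos k with rfl | hkpos
    · have h0 : ((Polynomial.X - Polynomial.C r) * Q).coeff 0 = - (r * Q.coeff 0) := by
        rw [sub_mul, Polynomial.coeff_sub, Polynomial.coeff_C_mul, mul_coeff_zero, coeff_X_zero, zero_mul, zero_sub]
      rw [h0]
      have h1 := ih hR 0 (Nat.zero_le c)
      rw [Nat.sub_zero] at h1 ⊢
      have : (-1:ℝ)^(c+1) * (-(r * Q.coeff 0)) = r * ((-1:ℝ)^c * Q.coeff 0) := by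
        rw [pow_succ]; ring
      rw [this]
      exact mul_pos hr h1
    · obtain ⟨k', rfl⟩ : ∃ k', k = k' + 1 := ⟨k - 1, by omega⟩
      have hck : ((Polynomial.X - Polynomial.C r) * Q).coeff (k'+1) = Q.coeff k' - r * Q.coeff (k'+1) := by
        rw [sub_mul, Polynomial.coeff_sub, Polynomial.coeff_X_mul, Polynomial.coeff_C_mul]
      rw [hck]
      have h1 := ih hR k' (by omega)
      have h2 : 0 ≤ (-1:ℝ)^(c - k') * (-(r * Q.coeff (k'+1))) := by
        rcases Nat.lt_or_ge k' c with hlt | hge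
        · rcases Nat.eq_or_lt_of_le hlt with heq | hlt2
          · -- k' + 1 = c
            have h3 := ih hR (k'+1) (by omega)
            have : (-1:ℝ)^(c-k') * (-(r * Q.coeff (k'+1)))
                = r * ((-1:ℝ)^(c-(k'+1)) * Q.coeff (k'+1)) := by
              rw [show c - k' = (c - (k'+1)) + 1 from by omega, pow_succ]; ring
            rw [this]
            exact le_of_lt (mul_pos hr h3)
          · have h3 := ih hR (k'+1) (by omega)
            have : (-1:ℝ)^(c-k') * (-(r * Q.coeff (k'+1)))
                = r * ((-1:ℝ)^(c-(k'+1)) * Q.coeff (k'+1)) := by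
              rw [show c - k' = (c - (k'+1)) + 1 from by omega, pow_succ]; ring
            rw [this]
            exact le_of_lt (mul_pos hr h3)
        · -- k' ≥ c, so k'+1 > c: coeff = 0
          have : Q.coeff (k'+1) = 0 := coeff_eq_zero_of_natDegree_lt (by omega)
          rw [this]
          simp
      have heq : c + 1 - (k'+1) = c - k' := by omega
      rw [heq]
      nlinarith [h1, h2]

open Polynomial in
lemma exists_nodes (b d : ℕ) (hb1 : 1 ≤ b) (hbd : b + 1 ≤ d) (hd2 : 2 ≤ d) :
    ∃ (t cc : Fin d → ℝ), ∀ k ≤ d, ∑ i, cc i * (t i)^k = if k = b then 1 else 0 := by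
  classical
  obtain ⟨n, rfl⟩ : ∃ n, d = n + 1 := ⟨d - 1, by omega⟩
  have hn1 : 1 ≤ n := by omega
  have hbn : b ≤ n := by omega
  set q : ℝ[X] := ∏ i : Fin n, (Polynomial.X - Polynomial.C (((i:ℕ):ℝ)+1)) with hq
  -- sign facts about q
  have hsign : ∀ k ≤ n, 0 < (-1:ℝ)^(n-k) * q.coeff k := by
    intro k hk
    set R : Multiset ℝ := Finset.univ.val.map (fun i : Fin n => ((i:ℕ):ℝ)+1) with hR
    have hcardR : R.card = n := by simp [hR]
    have hqR : q = (R.map (fun r => Polynomial.X - Polynomial.C r)).prod := by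
      rw [hq, hR, Multiset.map_map]
      rfl
    have hpos : ∀ r ∈ R, 0 < r := by
      intro r hr
      obtain ⟨i, _, rfl⟩ := Multiset.mem_map.mp hr
      positivity
    have := sign_coeff R hpos k (by omega)
    rwa [hcardR, ← hqR] at this
  have hqb : q.coeff b ≠ 0 := by
    intro h
    have := hsign b hbn
    rw [h, mul_zero] at this
    exact lt_irrefl _ this
  set τ : ℝ := q.coeff (b-1) / q.coeff b with hτ
  have hτneg : τ < 0 := by
    have h1 := hsign (b-1) (by omega)
    have h2 := hsign b hbn
    set A : ℝ := (-1:ℝ)^(n-b) with hA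
    have hA2 : A * A = 1 := by
      rw [hA, ← pow_add, ← two_mul, pow_mul]
      norm_num
    rw [show n - (b-1) = (n-b) + 1 from by omega, pow_succ] at h1
    have hprod : q.coeff (b-1) * q.coeff b < 0 := by
      have hmul := mul_pos h1 h2
      have heq : (A * -1 * q.coeff (b-1)) * (A * q.coeff b)
          = -((A*A) * (q.coeff (b-1) * q.coeff b)) := by ring
      rw [heq, hA2, one_mul] at hmul
      linarith
    rcases mul_neg_iff.mp hprod with ⟨hp1, hp2⟩ | ⟨hp1, hp2⟩
    · exact div_neg_of_pos_of_neg hp1 hp2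
    · exact div_neg_of_neg_of_pos hp1 hp2
  set t : Fin (n+1) → ℝ := Fin.snoc (fun i : Fin n => ((i:ℕ):ℝ)+1) τ with ht
  have htcast : ∀ i : Fin n, t i.castSucc = ((i:ℕ):ℝ)+1 := fun i => by
    rw [ht]; simp
  have htlast : t (Fin.last n) = τ := by rw [ht]; simp
  have hinj : Function.Injective t := by
    intro x y hxy
    induction x using Fin.lastCases with
    | last =>
      induction y using Fin.lastCases with
      | last => rfl
      | cast j =>
        rw [htlast, htcast] at hxy
        have : (0:ℝ) < ((j:ℕ):ℝ)+1 := by positivity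
        linarith
    | cast i =>
      induction y using Fin.lastCases with
      | last =>
        rw [htlast, htcast] at hxy
        have : (0:ℝ) < ((i:ℕ):ℝ)+1 := by positivity
        linarith
      | cast j =>
        rw [htcast, htcast] at hxy
        have h' : ((i:ℕ):ℝ) = ((j:ℕ):ℝ) := by linarith
        have : (i:ℕ) = (j:ℕ) := by exact_mod_cast h'
        exact congrArg Fin.castSucc (Fin.ext this)
  have hInjOn : Set.InjOn t (Finset.univ : Finset (Fin (n+1))) := fun x _ y _ h => hinj h
  have hcardu : (Finset.univ : Finset (Fin (n+1))).card = n + 1 := by simp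
  have hnodal : Lagrange.nodal Finset.univ t = q * (Polynomial.X - Polynomial.C τ) := by
    rw [Lagrange.nodal]
    rw [Fin.prod_univ_castSucc (fun i => Polynomial.X - Polynomial.C (t i))]
    rw [htlast, hq]
    congr 1
    exact Finset.prod_congr rfl fun i _ => by rw [htcast]
  have hcoeffb : (Lagrange.nodal Finset.univ t).coeff b = 0 := by
    rw [hnodal, mul_sub, Polynomial.coeff_sub, mul_comm q (Polynomial.C τ),
      Polynomial.coeff_C_mul]
    rw [show b = (b-1) + 1 from by omega, Polynomial.coeff_mul_X]
    rw [show b - 1 + 1 = b from by omega, hτ]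
    field_simp
    ring
  set cc : Fin (n+1) → ℝ := fun i => (Lagrange.basis Finset.univ t i).coeff b with hcc
  have hcoeff_interp : ∀ r : Fin (n+1) → ℝ,
      (Lagrange.interpolate Finset.univ t r).coeff b = ∑ i, r i * cc i := by
    intro r
    rw [Lagrange.interpolate_apply, Polynomial.finset_sum_coeff]
    exact Finset.sum_congr rfl fun i _ => by rw [Polynomial.coeff_C_mul, hcc]
  refine ⟨t, cc, fun k hk => ?_⟩
  rcases Nat.lt_or_ge k (n+1) with hkn | hkn
  · -- k ≤ n
    have hdeg : (Polynomial.X ^ k : ℝ[X]).degree < (Finset.univ : Finset (Fin (n+1))).card := by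
      rw [hcardu, Polynomial.degree_X_pow]
      exact_mod_cast hkn
    have := Lagrange.eq_interpolate (f := (Polynomial.X ^ k : ℝ[X])) hInjOn hdeg
    have hco := congrArg (fun p => Polynomial.coeff p b) this
    rw [hcoeff_interp] at hco
    have heval : ∀ i : Fin (n+1), Polynomial.eval (t i) (Polynomial.X ^ k : ℝ[X]) = t i ^ k := by
      intro i; rw [Polynomial.eval_pow, Polynomial.eval_X]
    rw [Polynomial.coeff_X_pow] at hco
    simp only [heval] at hco
    rw [show (∑ i, cc i * t i ^ k) = ∑ i, t i ^ k * cc i from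
      Finset.sum_congr rfl fun i _ => mul_comm _ _, ← hco]
    by_cases h : k = b
    · rw [if_pos h, if_pos h.symm]
    · rw [if_neg (fun hh => h hh.symm), if_neg h]
  · -- k = n+1
    have hkeq : k = n + 1 := by omega
    subst hkeq
    set f : ℝ[X] := Polynomial.X ^ (n+1) - Lagrange.nodal Finset.univ t with hfdef
    have hdegf : f.degree < (Finset.univ : Finset (Fin (n+1))).card := by
      rw [hcardu, hfdef]
      have h1 : (Polynomial.X ^ (n+1) : ℝ[X]).degree = ((n+1 : ℕ) : WithBot ℕ) :=
        Polynomial.degree_X_pow _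
      have h2 : (Lagrange.nodal Finset.univ t).degree = ((n+1 : ℕ) : WithBot ℕ) := by
        rw [Lagrange.degree_nodal, hcardu]
      refine lt_of_lt_of_le (Polynomial.degree_sub_lt (by rw [h1, h2]) (by
        exact pow_ne_zero _ Polynomial.X_ne_zero) ?_) (by rw [h1])
      rw [Polynomial.leadingCoeff_X_pow]
      exact (Lagrange.nodal_monic (s := Finset.univ) (v := t)).leadingCoeff.symm
    have := Lagrange.eq_interpolate (f := f) hInjOn hdegf
    have hco := congrArg (fun p => Polynomial.coeff p b) this
    rw [hcoeff_interp] at hco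
    have heval : ∀ i : Fin (n+1), Polynomial.eval (t i) f = t i ^ (n+1) := by
      intro i
      rw [hfdef, Polynomial.eval_sub, Polynomial.eval_pow, Polynomial.eval_X,
        Lagrange.eval_nodal_at_node (Finset.mem_univ i), sub_zero]
    have hcoeff_f : f.coeff b = 0 := by
      rw [hfdef, Polynomial.coeff_sub, hcoeffb, sub_zero, Polynomial.coeff_X_pow,
        if_neg (by omega)]
    rw [hcoeff_f] at hco
    simp only [heval] at hco
    rw [show (∑ i, cc i * t i ^ (n+1)) = ∑ i, t i ^ (n+1) * cc i from
      Finset.sum_congr rfl fun i _ => mul_comm _ _, ← hco]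
    rw [if_neg (by omega)]

/-- The real Waring rank of the binary monomial `x_0^{a_0} x_1^{a_1}` with
`0 < a_0 ≤ a_1` is `a_0 + a_1`. -/
theorem stmt_17 (a₀ a₁ : ℕ) (h₀ : 0 < a₀) (h₁ : a₀ ≤ a₁) :
    waringRank ℝ (a₀ + a₁)
      ((X 0 : MvPolynomial (Fin 2) ℝ) ^ a₀ * (X 1 : MvPolynomial (Fin 2) ℝ) ^ a₁) =
      a₀ + a₁ := by
  classical
  have hchoose_pos : 0 < (a₀ + a₁).choose a₁ := Nat.choose_pos (by omega)
  have hchoose0_pos : 0 < (a₀ + a₁).choose a₀ := Nat.choose_pos (by omega)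
  rw [waringRank]
  -- upper bound: a₀ + a₁ is in the set
  have hdS : (a₀ + a₁) ∈ {s | ∃ (c : Fin s → ℝ) (L : Fin s → Fin 2 → ℝ),
      ((X 0 : MvPolynomial (Fin 2) ℝ) ^ a₀ * (X 1 : MvPolynomial (Fin 2) ℝ) ^ a₁)
        = ∑ i, C (c i) * (∑ j, C (L i j) * X j) ^ (a₀ + a₁)} := by
    obtain ⟨t, cc0, hval⟩ := exists_nodes a₁ (a₀ + a₁) (by omega) (by omega) (by omega)
    refine ⟨fun i => cc0 i / (((a₀ + a₁).choose a₁ : ℝ)), fun i => ![1, t i], ?_⟩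
    apply MvPolynomial.ext
    intro m
    rw [coeff_rep, coeff_monomial_side]
    simp only [Matrix.cons_val_zero, Matrix.cons_val_one, Matrix.head_cons]
    by_cases hmd : m 0 + m 1 = a₀ + a₁
    · rw [if_pos hmd]
      have hval1 := hval (m 1) (by omega)
      have hsimp : (∑ i, cc0 i / (((a₀ + a₁).choose a₁ : ℝ)) * (1:ℝ)^(m 0) * (t i)^(m 1))
          = (((a₀ + a₁).choose a₁ : ℝ))⁻¹ * ∑ i, cc0 i * (t i)^(m 1) := by
        rw [Finset.mul_sum]
        refine Finset.sum_congr rfl fun i _ => ?_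
        rw [one_pow]
        ring
      rw [hsimp, hval1]
      by_cases h1 : m 1 = a₁
      · have h0 : m 0 = a₀ := by omega
        rw [if_pos h1, if_pos ⟨h0, h1⟩, h0]
        have hsym : (a₀ + a₁).choose a₀ = (a₀ + a₁).choose a₁ := Nat.choose_symm_add
        rw [hsym]
        have hne : (((a₀ + a₁).choose a₁ : ℝ)) ≠ 0 := by positivity
        field_simp
      · rw [if_neg h1, if_neg (fun h => h1 h.2)]
        ring
    · rw [if_neg hmd, if_neg (fun h => hmd (by omega))]
  -- lower bound
  have hlower : ∀ s ∈ {s | ∃ (c : Fin s → ℝ) (L : Fin s → Fin 2 → ℝ),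
      ((X 0 : MvPolynomial (Fin 2) ℝ) ^ a₀ * (X 1 : MvPolynomial (Fin 2) ℝ) ^ a₁)
        = ∑ i, C (c i) * (∑ j, C (L i j) * X j) ^ (a₀ + a₁)}, (a₀ + a₁) ≤ s := by
    intro s hs
    by_contra hlt
    push_neg at hlt
    obtain ⟨c, L, hF⟩ := hs
    have hene : (((a₀ + a₁).choose a₀ : ℝ))⁻¹ ≠ 0 := inv_ne_zero (by positivity)
    refine no_rep a₀ a₁ h₀ h₁ _ hene s hlt c (fun i => L i 0) (fun i => L i 1) ?_
    intro k hk
    have hco := congrArg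
      (coeff (Finsupp.single (0 : Fin 2) (a₀ + a₁ - k) + Finsupp.single (1 : Fin 2) k)) hF
    rw [coeff_rep, coeff_monomial_side] at hco
    rw [fin2_apply_0, fin2_apply_1] at hco
    rw [if_pos (show a₀ + a₁ - k + k = a₀ + a₁ from by omega)] at hco
    by_cases hkb : k = a₁
    · have hAe : a₀ + a₁ - k = a₀ := by omega
      rw [if_pos ⟨hAe, hkb⟩, hAe] at hco
      rw [if_pos hkb, hAe]
      have hne : (((a₀ + a₁).choose a₀ : ℝ)) ≠ 0 := by positivity
      have hmul : (∑ i, c i * (L i 0)^a₀ * (L i 1)^k)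
          * (((a₀ + a₁).choose a₀ : ℝ)) = 1 := by
        rw [mul_comm]
        linarith [hco]
      exact eq_inv_of_mul_eq_one_left hmul
    · rw [if_neg (fun h => hkb h.2)] at hco
      rw [if_neg hkb]
      have hne : (((a₀ + a₁).choose (a₀ + a₁ - k) : ℝ)) ≠ 0 := by
        have : 0 < (a₀ + a₁).choose (a₀ + a₁ - k) := Nat.choose_pos (by omega)
        positivity
      rcases mul_eq_zero.mp hco.symm with h | h
      · exact absurd h hne
      · exact h
  exact le_antisymm (Nat.sInf_le hdS) (le_csInf ⟨a₀ + a₁, hdS⟩ hlower)
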